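/- (Robustness of TVD, half-target bound) In the targeted value algorithm with detection, suppose the switch to the conservative single-threshold mode occurs at stage s, and the conservative mode from stage s guarantees reward at least (1/2)·E[max_{i ≥ s} v_i] ≥ (1/2)·g_{s−1}. Then for every t ≤ s, TVD_t ≥ g_{t−1} − (1/2)·g_{s−1}; in particular TVD_1 ≥ g_0 − (1/2)·g_{s−1} ≥ (1/2)·g_0. -/

import Mathlib

open MeasureTheory ProbabilityTheory

lemma int_max_split {Ω : Type*} [MeasureSpace Ω] [IsProbabilityMeasure (ℙ : Measure Ω)]
    (v : Ω → ℝ) (hm : Measurable v) (hi : Integrable v) (c : ℝ) :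
    ∫ ω, max (v ω) c =
      (∫ ω, Set.indicator {ω | c ≤ v ω} v ω) + (ℙ {ω | v ω < c}).toReal * c := by
  have hA : MeasurableSet {ω | c ≤ v ω} := measurableSet_le measurable_const hm
  have hB : MeasurableSet {ω | v ω < c} := measurableSet_lt hm measurable_const
  have h1 : Integrable (Set.indicator {ω | c ≤ v ω} v) := hi.indicator hA
  have h2 : Integrable (Set.indicator {ω | v ω < c} (fun _ => c)) :=
    (integrable_const c).indicator hB
  have hpt : (fun ω => max (v ω) c) =
      fun ω => Set.indicator {ω | c ≤ v ω} v ω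
        + Set.indicator {ω | v ω < c} (fun _ => c) ω := by
    funext ω
    by_cases h : c ≤ v ω
    · simp [Set.indicator, h, not_lt.mpr h, max_eq_left h]
    · push_neg at h
      simp [Set.indicator, h, not_le.mpr h, max_eq_right h.le]
  rw [hpt, integral_add h1 h2, integral_indicator_const c hB]
  simp [smul_eq_mul]
  exact Or.inl rfl

theorem tvd_half_target_bound
    {Ω : Type*} [MeasureSpace Ω] [IsProbabilityMeasure (ℙ : Measure Ω)]
    (n : ℕ) (v : ℕ → Ω → ℝ)
    (hmeas : ∀ i, Measurable (v i))
    (hnn : ∀ i ω, 0 ≤ v i ω)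
    (hint : ∀ i, Integrable (v i))
    (hindep : iIndepFun v ℙ)
    (s : ℕ) (hs1 : 1 ≤ s) (hsn : s ≤ n)
    (g : ℕ → ℝ) (hg0nn : 0 ≤ g 0)
    (hgrec : ∀ t ∈ Finset.Icc 1 (s - 1),
      IsLeast {x : ℝ | 0 ≤ x ∧ g (t - 1) ≤ ∫ ω, max (v t ω) x} (g t))
    (TVD : ℕ → ℝ)
    (hTVDrec : ∀ t ∈ Finset.Icc 1 (s - 1),
      TVD t = (∫ ω, Set.indicator {ω | g t ≤ v t ω} (v t) ω)
        + (ℙ {ω | v t ω < g t}).toReal * TVD (t + 1))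
    (hbase : TVD s ≥ (1 / 2) * ∫ ω, ⨆ i ∈ Finset.Icc s n, v i ω)
    (hbase' : (∫ ω, ⨆ i ∈ Finset.Icc s n, v i ω) ≥ g (s - 1)) :
    (∀ t ∈ Finset.Icc 1 s, TVD t ≥ g (t - 1) - (1 / 2) * g (s - 1))
      ∧ TVD 1 ≥ g 0 - (1 / 2) * g (s - 1) ∧ TVD 1 ≥ (1 / 2) * g 0 := by
  -- g is nonneg and nonincreasing up to s-1
  have gnn : ∀ t, t ≤ s - 1 → 0 ≤ g t ∧ g t ≤ g 0 := by
    intro t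
    induction t with
    | zero => intro _; exact ⟨hg0nn, le_rfl⟩
    | succ t ih =>
      intro ht
      have ih' := ih (by omega)
      have hmem := hgrec (t + 1) (by simp [Finset.mem_Icc]; omega)
      have h1 : 0 ≤ g (t + 1) := hmem.1.1
      have h2 : g (t + 1) ≤ g t := by
        apply hmem.2
        refine ⟨ih'.1, ?_⟩
        simp only [Nat.add_sub_cancel]
        calc g t = ∫ _ω : Ω, g t ∂ℙ := by simp
          _ ≤ _ := integral_mono (integrable_const _)
              ((hint (t + 1)).sup (integrable_const _)) (fun ω => le_max_right _ _)
      exact ⟨h1, h2.trans ih'.2⟩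
  have hgs_nn : 0 ≤ g (s - 1) := (gnn (s - 1) le_rfl).1
  have hgs_le : g (s - 1) ≤ g 0 := (gnn (s - 1) le_rfl).2
  have key : ∀ d t, 1 ≤ t → t + d = s → TVD t ≥ g (t - 1) - (1 / 2) * g (s - 1) := by
    intro d
    induction d with
    | zero =>
      intro t ht1 hts
      have : t = s := by omega
      subst this
      linarith
    | succ d ih =>
      intro t ht1 hts
      have htmem : t ∈ Finset.Icc 1 (s - 1) := by simp [Finset.mem_Icc]; omega
      have hrec := hTVDrec t htmem
      have hmem := hgrec t htmem
      have hgt_nn : 0 ≤ g t := hmem.1.1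
      have hsplit := int_max_split (v t) (hmeas t) (hint t) (g t)
      have hle : g (t - 1) ≤ (∫ ω, Set.indicator {ω | g t ≤ v t ω} (v t) ω)
          + (ℙ {ω | v t ω < g t}).toReal * g t := by
        have := hmem.1.2
        rw [hsplit] at this
        exact this
      have ihn := ih (t + 1) (by omega) (by omega)
      simp only [Nat.add_sub_cancel] at ihn
      set P := (ℙ {ω | v t ω < g t}).toReal with hP
      have hP0 : 0 ≤ P := ENNReal.toReal_nonneg
      have hP1 : P ≤ 1 := by
        rw [hP]
        have : ℙ {ω | v t ω < g t} ≤ 1 := prob_le_one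
        exact ENNReal.toReal_le_of_le_ofReal zero_le_one (by simpa using this)
      have hmul : P * (g t - (1 / 2) * g (s - 1)) ≤ P * TVD (t + 1) :=
        mul_le_mul_of_nonneg_left ihn hP0
      have hPc : P * ((1 / 2) * g (s - 1)) ≤ (1 / 2) * g (s - 1) := by
        nlinarith
      rw [hrec]
      nlinarith
  refine ⟨?_, ?_, ?_⟩
  · intro t ht
    simp only [Finset.mem_Icc] at ht
    exact key (s - t) t ht.1 (by omega)
  · have := key (s - 1) 1 le_rfl (by omega)
    simpa using this
  · have := key (s - 1) 1 le_rfl (by omega)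
    simp only [Nat.sub_self] at this
    linarith
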